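/- Let D be an integral domain with quotient field K, n a positive integer, and P a set of monic polynomials in D[X] of degree n, each of which splits into linear factors over D. Let f = g/d ∈ K[X] with g ∈ D[X] and d ∈ D \ {0}. Then f belongs to Int(Tₙ^P(D), Mₙ(D)) if and only if for every p ∈ P, g lies in the ideal of D[X] generated by d and p. In particular, Int(Tₙ^P(D), Mₙ(D)) = Int(Mₙ^P(D), Mₙ(D)). -/

import Mathlib

open Polynomial

/-- `IntOn D K S` is the set of polynomials `f ∈ K[X]` that are integer-valued on the set
`S ⊆ Mₙ(D)`: for every `M ∈ S`, evaluating `f` at the image of `M` in `Mₙ(K)` yields a matrix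
all of whose entries lie in (the image of) `D`. -/
def IntOn (D K : Type*) [CommRing D] [Field K] [Algebra D K] {n : ℕ}
    (S : Set (Matrix (Fin n) (Fin n) D)) : Set (Polynomial K) :=
  {f | ∀ M ∈ S, ∀ i j, ∃ d : D,
    algebraMap D K d = (Polynomial.aeval (M.map (algebraMap D K)) f) i j}

namespace Stmt13

variable {D : Type*} [CommRing D] {n : ℕ}

/-- The companion-like lower triangular matrix with diagonal `a` and 1's on the subdiagonal. -/
def triMat (a : Fin n → D) : Matrix (Fin n) (Fin n) D :=
  Matrix.of fun i j => if i = j then a i else if (i : ℕ) = (j : ℕ) + 1 then 1 else 0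

/-- Standard basis vector (extended by zero for `m ≥ n`). -/
def eVec (m : ℕ) : Fin n → D := fun k => if (k : ℕ) = m then 1 else 0

/-- `a` extended to `ℕ`. -/
def bSeq (a : Fin n → D) (i : ℕ) : D := if h : i < n then a ⟨i, h⟩ else 0

lemma eVec_of_ge {m : ℕ} (h : n ≤ m) : (eVec m : Fin n → D) = 0 := by
  funext k
  simp only [eVec, Pi.zero_apply, ite_eq_right_iff]
  intro hk
  exact absurd (hk ▸ k.isLt) (not_lt.mpr h)

lemma triMat_mulVec_eVec (a : Fin n → D) {m : ℕ} (hm : m < n) :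
    (triMat a).mulVec (eVec m) = a ⟨m, hm⟩ • eVec m + eVec (m + 1) := by
  funext k
  have hiff : ∀ j : Fin n, ((j : ℕ) = m) = (j = ⟨m, hm⟩) := fun j => by
    simp [Fin.ext_iff]
  simp only [Matrix.mulVec, dotProduct, eVec, hiff, mul_ite, mul_one, mul_zero,
    Finset.sum_ite_eq', Finset.mem_univ, if_true, Pi.add_apply, Pi.smul_apply, smul_eq_mul]
  rcases eq_or_ne (k : ℕ) m with h | h
  · have hk : k = ⟨m, hm⟩ := Fin.ext h
    subst hk
    simp [triMat]
  · rcases eq_or_ne (k : ℕ) (m + 1) with h2 | h2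
    · have hk : k ≠ ⟨m, hm⟩ := by simp [Fin.ext_iff, h]
      simp [triMat, hk, h, h2]
    · have hk : k ≠ ⟨m, hm⟩ := by simp [Fin.ext_iff, h]
      simp [triMat, hk, h, h2]

lemma aeval_newton_mulVec (a : Fin n → D) :
    ∀ m ≤ n, (Polynomial.aeval (triMat a)
      (∏ i ∈ Finset.range m, (X - C (bSeq a i)))).mulVec (eVec 0) = eVec m := by
  intro m
  induction m with
  | zero => intro _; simp [Matrix.one_mulVec]
  | succ m ih =>
    intro hm
    have hmn : m < n := hm
    have hb : bSeq a m = a ⟨m, hmn⟩ := dif_pos hmn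
    rw [Finset.prod_range_succ, mul_comm, map_mul, ← Matrix.mulVec_mulVec, ih hmn.le,
      map_sub, aeval_X, aeval_C, Algebra.algebraMap_eq_smul_one, Matrix.sub_mulVec,
      Matrix.smul_mulVec, Matrix.one_mulVec, triMat_mulVec_eVec a hmn, hb]
    abel


lemma mul_triMat_apply (a : Fin n → D) (A : Matrix (Fin n) (Fin n) D) (i j : Fin n) :
    (A * triMat a) i j
      = A i j * a j + (if h : (j : ℕ) + 1 < n then A i ⟨(j : ℕ) + 1, h⟩ else 0) := by
  rw [Matrix.mul_apply]
  by_cases h : (j : ℕ) + 1 < n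
  · rw [dif_pos h]
    have : ∀ k : Fin n, A i k * triMat a k j
        = (if k = j then A i j * a j else 0) + (if k = ⟨(j : ℕ) + 1, h⟩ then A i k else 0) := by
      intro k
      rcases eq_or_ne k j with hk | hk
      · subst hk
        have : k ≠ (⟨(k : ℕ) + 1, h⟩ : Fin n) := by simp [Fin.ext_iff]
        simp [triMat, this]
      · rcases eq_or_ne k (⟨(j : ℕ) + 1, h⟩ : Fin n) with hk2 | hk2
        · subst hk2
          have h2 : ((⟨(j : ℕ) + 1, h⟩ : Fin n) : ℕ) = (j : ℕ) + 1 := rfl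
          simp [triMat, hk, h2]
        · have h2 : ((k : ℕ) = (j : ℕ) + 1) = False := by
            simp only [eq_iff_iff, iff_false]
            intro hc
            exact hk2 (Fin.ext hc)
          simp [triMat, hk, h2, hk2]
    rw [Finset.sum_congr rfl fun k _ => this k, Finset.sum_add_distrib,
      Finset.sum_ite_eq', Finset.sum_ite_eq']
    simp
  · rw [dif_neg h]
    have : ∀ k : Fin n, A i k * triMat a k j = (if k = j then A i j * a j else 0) := by
      intro k
      rcases eq_or_ne k j with hk | hk
      · subst hk; simp [triMat, Fin.ext_iff]
      · have h2 : ((k : ℕ) = (j : ℕ) + 1) = False := by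
          simp only [eq_iff_iff, iff_false]
          intro hc
          exact h (hc ▸ k.isLt)
        simp [triMat, hk, h2]
    rw [Finset.sum_congr rfl fun k _ => this k, Finset.sum_ite_eq']
    simp

lemma aeval_triMat_tri_diag (a : Fin n → D) (q : D[X]) :
    (∀ i j : Fin n, i < j → (Polynomial.aeval (triMat a) q) i j = 0) ∧
    (∀ k : Fin n, (Polynomial.aeval (triMat a) q) k k = q.eval (a k)) := by
  induction q using Polynomial.induction_on with
  | C c =>
    constructor
    · intro i j hij
      simp [aeval_C, Matrix.algebraMap_matrix_apply, ne_of_lt hij]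
    · intro k
      simp [aeval_C, Matrix.algebraMap_matrix_apply]
  | add p q hp hq =>
    constructor
    · intro i j hij
      simp [map_add, Matrix.add_apply, hp.1 i j hij, hq.1 i j hij]
    · intro k
      simp [map_add, Matrix.add_apply, hp.2 k, hq.2 k]
  | monomial m c ih =>
    have hrw : C c * X ^ (m + 1) = C c * X ^ m * X := by ring
    rw [hrw, map_mul, aeval_X]
    constructor
    · intro i j hij
      rw [mul_triMat_apply]
      have h1 : (Polynomial.aeval (triMat a) (C c * X ^ m)) i j = 0 := ih.1 i j hij
      rw [h1, zero_mul, zero_add]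
      by_cases h : (j : ℕ) + 1 < n
      · rw [dif_pos h]
        exact ih.1 i ⟨(j : ℕ) + 1, h⟩ (lt_trans hij (by simp [Fin.lt_def]))
      · rw [dif_neg h]
    · intro k
      rw [mul_triMat_apply]
      have h1 : ∀ h : (k : ℕ) + 1 < n,
          (Polynomial.aeval (triMat a) (C c * X ^ m)) k ⟨(k : ℕ) + 1, h⟩ = 0 := by
        intro h
        exact ih.1 k ⟨(k : ℕ) + 1, h⟩ (by simp [Fin.lt_def])
      have h2 : (if h : (k : ℕ) + 1 < n then
          (Polynomial.aeval (triMat a) (C c * X ^ m)) k ⟨(k : ℕ) + 1, h⟩ else 0) = 0 := by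
        by_cases h : (k : ℕ) + 1 < n
        · rw [dif_pos h]; exact h1 h
        · rw [dif_neg h]
      rw [h2, add_zero, ih.2 k]
      simp [pow_succ, mul_assoc]

lemma triMat_charpoly (a : Fin n → D) : (triMat a).charpoly = ∏ i, (X - C (a i)) := by
  have htri : (Matrix.charmatrix (triMat a)).BlockTriangular OrderDual.toDual := by
    intro i j hij
    have hij' : i < j := hij
    have hne : i ≠ j := ne_of_lt hij'
    rw [Matrix.charmatrix_apply_ne _ _ _ hne]
    have h0 : triMat a i j = 0 := by
      have hlt : (i : ℕ) < (j : ℕ) := hij'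
      have h2 : ((i : ℕ) = (j : ℕ) + 1) = False := by
        simp only [eq_iff_iff, iff_false]
        omega
      simp [triMat, hne, h2]
    simp [h0]
  rw [show (triMat a).charpoly = (Matrix.charmatrix (triMat a)).det from rfl,
    Matrix.det_of_lowerTriangular _ htri]
  refine Finset.prod_congr rfl fun i _ => ?_
  rw [Matrix.charmatrix_apply_eq]
  simp [triMat]


lemma mulVec_eVec_apply (A : Matrix (Fin n) (Fin n) D) {m : ℕ} (hm : m < n) (k : Fin n) :
    A.mulVec (eVec m) k = A k ⟨m, hm⟩ := by
  have hiff : ∀ j : Fin n, ((j : ℕ) = m) = (j = ⟨m, hm⟩) := fun j => by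
    simp [Fin.ext_iff]
  simp [Matrix.mulVec, dotProduct, eVec, hiff, mul_ite, mul_one, mul_zero,
    Finset.sum_ite_eq', Finset.mem_univ, if_true]

lemma mem_span_of_dvd_col (a : Fin n → D) (d : D) :
    ∀ m ≤ n, ∀ q : D[X],
      (∀ k : Fin n, d ∣ ((Polynomial.aeval (triMat a) q).mulVec (eVec 0)) k) →
      q ∈ Ideal.span {C d, ∏ i ∈ Finset.range m, (X - C (bSeq a i))} := by
  intro m
  induction m with
  | zero =>
    intro _ q _
    have h1 : (1 : D[X]) ∈ Ideal.span {C d, ∏ i ∈ Finset.range 0, (X - C (bSeq a i))} := by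
      apply Ideal.subset_span
      simp
    exact Ideal.eq_top_iff_one _ |>.mpr h1 ▸ Submodule.mem_top
  | succ m ih =>
    intro hm q hq
    have hmn : m < n := hm
    obtain ⟨u, v, huv⟩ := Ideal.mem_span_pair.mp (ih hmn.le q hq)
    set N : D[X] := ∏ i ∈ Finset.range m, (X - C (bSeq a i)) with hN
    set M := triMat a
    -- column of aeval q
    have hcol : (Polynomial.aeval M q).mulVec (eVec 0)
        = d • ((Polynomial.aeval M u).mulVec (eVec 0))
          + (Polynomial.aeval M v).mulVec (eVec m) := by
      rw [← huv, map_add, map_mul, map_mul, aeval_C, Matrix.add_mulVec]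
      congr 1
      · rw [Algebra.algebraMap_eq_smul_one, mul_smul_comm, mul_one,
          Matrix.smul_mulVec]
      · rw [← Matrix.mulVec_mulVec, aeval_newton_mulVec a m hmn.le]
    have hdvd2 : d ∣ v.eval (a ⟨m, hmn⟩) := by
      have h1 := hq ⟨m, hmn⟩
      rw [hcol] at h1
      have h2 : ((Polynomial.aeval M v).mulVec (eVec m)) ⟨m, hmn⟩
          = v.eval (a ⟨m, hmn⟩) := by
        rw [mulVec_eVec_apply _ hmn, (aeval_triMat_tri_diag a v).2]
      simp only [Pi.add_apply, Pi.smul_apply, smul_eq_mul, h2] at h1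
      exact (dvd_add_right (Dvd.intro _ rfl)).mp h1
    obtain ⟨e, he⟩ := hdvd2
    obtain ⟨w, hv⟩ : ∃ w, v = (X - C (a ⟨m, hmn⟩)) * w + C d * C e := by
      refine ⟨v /ₘ (X - C (a ⟨m, hmn⟩)), ?_⟩
      conv_lhs => rw [← Polynomial.modByMonic_add_div v (X - C (a ⟨m, hmn⟩))]
      rw [Polynomial.modByMonic_X_sub_C_eq_C_eval, he, map_mul]
      ring
    have hb : bSeq a m = a ⟨m, hmn⟩ := dif_pos hmn
    rw [Finset.prod_range_succ, ← hN, hb]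
    refine Ideal.mem_span_pair.mpr ⟨u + C e * N, w, ?_⟩
    rw [← huv, hv]
    ring


variable {K : Type*} [Field K] [Algebra D K]

lemma aeval_matrix_map (M : Matrix (Fin n) (Fin n) D) (q : D[X]) :
    Polynomial.aeval (M.map (algebraMap D K)) (q.map (algebraMap D K))
      = (Polynomial.aeval M q).map (algebraMap D K) := by
  rw [Polynomial.aeval_map_algebraMap]
  have h := Polynomial.aeval_algHom_apply
    (AlgHom.mapMatrix (m := Fin n) (Algebra.ofId D K)) M q
  simpa [AlgHom.mapMatrix_apply, Algebra.ofId_apply,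
    show ⇑(Algebra.ofId D K) = algebraMap D K from funext fun _ => rfl] using h

lemma intOn_imp_span [IsFractionRing D K]
    (hn : 0 < n) (P : Set D[X])
    (hP : ∀ p ∈ P, ∃ a : Fin n → D, p = ∏ i, (X - C (a i)))
    (g : D[X]) (d : D) (f : K[X])
    (hf : f * C (algebraMap D K d) = g.map (algebraMap D K))
    (hfInt : f ∈ IntOn D K {M : Matrix (Fin n) (Fin n) D |
      (∀ i j, i < j → M i j = 0) ∧ M.charpoly ∈ P}) :
    ∀ p ∈ P, g ∈ Ideal.span {C d, p} := by
  intro p hp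
  obtain ⟨a, ha⟩ := hP p hp
  have hprod : ∏ i ∈ Finset.range n, (X - C (bSeq a i)) = p := by
    rw [ha, ← Fin.prod_univ_eq_prod_range (fun i => X - C (bSeq a i)) n]
    refine Finset.prod_congr rfl fun i _ => ?_
    rw [bSeq, dif_pos i.isLt]
  have hMmem : triMat a ∈ {M : Matrix (Fin n) (Fin n) D |
      (∀ i j, i < j → M i j = 0) ∧ M.charpoly ∈ P} := by
    constructor
    · intro i j hij
      have hlt : (i : ℕ) < (j : ℕ) := hij
      have h2 : ((i : ℕ) = (j : ℕ) + 1) = False := by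
        simp only [eq_iff_iff, iff_false]; omega
      simp [triMat, ne_of_lt hij, h2]
    · rw [triMat_charpoly, ← ha]; exact hp
  have hdvd : ∀ k : Fin n, d ∣ ((Polynomial.aeval (triMat a) g).mulVec (eVec 0)) k := by
    intro k
    obtain ⟨c, hc⟩ := hfInt (triMat a) hMmem k ⟨0, hn⟩
    refine ⟨c, ?_⟩
    rw [mulVec_eVec_apply _ hn]
    apply IsFractionRing.injective D K
    have e1 : ((Polynomial.aeval (triMat a) g).map (algebraMap D K)) k ⟨0, hn⟩
        = algebraMap D K d
          * ((Polynomial.aeval ((triMat a).map (algebraMap D K)) f) k ⟨0, hn⟩) := by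
      rw [← aeval_matrix_map, ← hf, map_mul, aeval_C, Algebra.algebraMap_eq_smul_one,
        mul_smul_comm, mul_one, Matrix.smul_apply, smul_eq_mul]
    have e2 : algebraMap D K ((Polynomial.aeval (triMat a) g) k ⟨0, hn⟩)
        = ((Polynomial.aeval (triMat a) g).map (algebraMap D K)) k ⟨0, hn⟩ := rfl
    rw [e2, e1, ← hc, map_mul]
  have h := mem_span_of_dvd_col a d n le_rfl g hdvd
  rwa [hprod] at h

lemma span_imp_intOn [IsFractionRing D K]
    (P : Set D[X]) (g : D[X]) (d : D) (hd : d ≠ 0) (f : K[X])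
    (hf : f * C (algebraMap D K d) = g.map (algebraMap D K))
    (h : ∀ p ∈ P, g ∈ Ideal.span {C d, p}) :
    f ∈ IntOn D K {M : Matrix (Fin n) (Fin n) D | M.charpoly ∈ P} := by
  intro M hM i j
  obtain ⟨u, v, huv⟩ := Ideal.mem_span_pair.mp (h M.charpoly hM)
  refine ⟨(Polynomial.aeval M u) i j, ?_⟩
  have hd' : algebraMap D K d ≠ 0 := fun h0 =>
    hd (IsFractionRing.injective D K (by rw [h0, map_zero]))
  apply mul_left_cancel₀ hd'
  have key : algebraMap D K d • Polynomial.aeval (M.map (algebraMap D K)) f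
      = algebraMap D K d • ((Polynomial.aeval M u).map (algebraMap D K)) := by
    have e0 : Polynomial.aeval (M.map (algebraMap D K)) (f * C (algebraMap D K d))
        = algebraMap D K d • Polynomial.aeval (M.map (algebraMap D K)) f := by
      rw [map_mul, aeval_C, Algebra.algebraMap_eq_smul_one, mul_smul_comm, mul_one]
    rw [← e0, hf, aeval_matrix_map]
    have e2 : Polynomial.aeval M g = d • Polynomial.aeval M u := by
      rw [← huv, map_add, map_mul, map_mul, aeval_C, Matrix.aeval_self_charpoly,
        mul_zero, add_zero, Algebra.algebraMap_eq_smul_one, mul_smul_comm, mul_one]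
    rw [e2]
    ext i' j'
    simp [Matrix.map_apply, Matrix.smul_apply, smul_eq_mul, map_mul]
  have hkey := congrArg (fun A => A i j) key
  simp only [Matrix.smul_apply, smul_eq_mul, Matrix.map_apply] at hkey
  exact hkey.symm

end Stmt13

/-- Let `D` be a domain with quotient field `K`, `n` positive, and `P` a set
of monic polynomials in `D[X]` of degree `n`, each totally split over `D`.  Let
`f = g/d ∈ K[X]` with `g ∈ D[X]`, `d ∈ D \ {0}`.  Then `f ∈ Int(Tₙ^P(D), Mₙ(D))` iff for every
`p ∈ P`, `g` lies in the ideal of `D[X]` generated by `d` and `p`.  In particular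
`Int(Tₙ^P(D), Mₙ(D)) = Int(Mₙ^P(D), Mₙ(D))`. -/
theorem mem_intOn_triangular_charpolySet_iff (D K : Type*) [CommRing D] [IsDomain D] [Field K]
    [Algebra D K] [IsFractionRing D K] (n : ℕ) (hn : 0 < n) (P : Set (Polynomial D))
    (hP : ∀ p ∈ P, ∃ a : Fin n → D, p = ∏ i, (X - C (a i)))
    (g : D[X]) (d : D) (hd : d ≠ 0) (f : K[X])
    (hf : f * C (algebraMap D K d) = g.map (algebraMap D K)) :
    (f ∈ IntOn D K
        {M : Matrix (Fin n) (Fin n) D | (∀ i j, i < j → M i j = 0) ∧ M.charpoly ∈ P} ↔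
      ∀ p ∈ P, g ∈ Ideal.span {Polynomial.C d, p}) ∧
    IntOn D K {M : Matrix (Fin n) (Fin n) D | (∀ i j, i < j → M i j = 0) ∧ M.charpoly ∈ P} =
      IntOn D K {M : Matrix (Fin n) (Fin n) D | M.charpoly ∈ P} := by
  have hmono : ∀ S T : Set (Matrix (Fin n) (Fin n) D),
      S ⊆ T → IntOn D K T ⊆ IntOn D K S :=
    fun S T hST f' hf' M hM => hf' M (hST hM)
  have hTM : {M : Matrix (Fin n) (Fin n) D | (∀ i j, i < j → M i j = 0) ∧ M.charpoly ∈ P}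
      ⊆ {M : Matrix (Fin n) (Fin n) D | M.charpoly ∈ P} := fun M hM => hM.2
  constructor
  · constructor
    · exact fun hfInt => Stmt13.intOn_imp_span hn P hP g d f hf hfInt
    · intro h
      exact hmono _ _ hTM (Stmt13.span_imp_intOn P g d hd f hf h)
  · apply Set.Subset.antisymm
    · intro f' hf'
      obtain ⟨b, hb⟩ :=
        IsLocalization.integerNormalization_map_to_map (nonZeroDivisors D) f'
      have hbne : (b : D) ≠ 0 := nonZeroDivisors.coe_ne_zero b
      have hf'' : f' * C (algebraMap D K (b : D))
          = (IsLocalization.integerNormalization (nonZeroDivisors D) f').map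
              (algebraMap D K) := by
        rw [hb, ← IsScalarTower.algebraMap_smul K ((b : D)) f',
          Polynomial.smul_eq_C_mul, mul_comm]
      exact Stmt13.span_imp_intOn P _ (b : D) hbne f' hf''
        (Stmt13.intOn_imp_span hn P hP _ (b : D) f' hf'' hf')
    · exact hmono _ _ hTM
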